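/- Let X be a Banach space, T(t) a strongly continuous semigroup on X with ‖T(t)‖ ≤ M e^{-δt} for some M ≥ 1, δ > 0, and let u(t) = T(t)u₀ + ∫₀ᵗ T(t-s) f(u(s)) ds where f : X → X satisfies ‖f(x)‖ ≤ K ‖x‖² for all x. If ‖u(t)‖ ≤ R for all t ≥ 0 with R < δ/(2MK) and ‖u₀‖ sufficiently small, then there exist C ≥ 1 and γ > 0 with ‖u(t)‖ ≤ C e^{-γt}‖u₀‖ for all t ≥ 0. -/

import Mathlib

open scoped intervalIntegral

private lemma aux_exp_le {a x y : ℝ} (h : Real.exp a * x ≤ y) : x ≤ Real.exp (-a) * y := by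
  have h2 : Real.exp (-a) * (Real.exp a * x) ≤ Real.exp (-a) * y :=
    mul_le_mul_of_nonneg_left h (Real.exp_nonneg _)
  rwa [← mul_assoc, ← Real.exp_add, neg_add_cancel, Real.exp_zero, one_mul] at h2

set_option maxHeartbeats 2000000 in
/-- A mild solution of a semilinear equation with quadratically bounded nonlinearity and
exponentially stable linear part decays exponentially, provided it stays in a sufficiently
small ball and the initial datum is sufficiently small. -/
theorem mild_solution_exponential_decay
    {X : Type*} [NormedAddCommGroup X] [NormedSpace ℝ X] [CompleteSpace X]
    (T : ℝ → X →L[ℝ] X) (M δ K R : ℝ) (hM : 1 ≤ M) (hδ : 0 < δ) (hK : 0 < K)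
    (hsem : ∀ t s : ℝ, 0 ≤ t → 0 ≤ s → T (t + s) = (T t).comp (T s))
    (hT0 : T 0 = ContinuousLinearMap.id ℝ X)
    (hdecay : ∀ t : ℝ, 0 ≤ t → ‖T t‖ ≤ M * Real.exp (-δ * t))
    (f : X → X) (hf : ∀ x : X, ‖f x‖ ≤ K * ‖x‖ ^ 2)
    (hR : R < δ / (2 * M * K)) :
    ∃ ε : ℝ, 0 < ε ∧ ∀ (u₀ : X) (u : ℝ → X), ‖u₀‖ ≤ ε →
      (∀ t : ℝ, 0 ≤ t → u t = T t u₀ + ∫ s in (0 : ℝ)..t, T (t - s) (f (u s))) →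
      (∀ t : ℝ, 0 ≤ t → ‖u t‖ ≤ R) →
      ∃ C γ : ℝ, 1 ≤ C ∧ 0 < γ ∧ ∀ t : ℝ, 0 ≤ t →
        ‖u t‖ ≤ C * Real.exp (-γ * t) * ‖u₀‖ := by
  have hM0 : (0:ℝ) < M := lt_of_lt_of_le one_pos hM
  refine ⟨1, one_pos, fun u₀ u hu₀ hmild hbdd => ?_⟩
  rcases lt_or_ge R 0 with hR0 | hR0
  · exact absurd ((norm_nonneg (u 0)).trans (hbdd 0 le_rfl)) (not_le.mpr hR0)
  obtain ⟨γ, hγdef⟩ : ∃ γ : ℝ, γ = δ / 2 := ⟨δ / 2, rfl⟩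
  have hγ : 0 < γ := by rw [hγdef]; positivity
  obtain ⟨θ, hθdef⟩ : ∃ θ : ℝ, θ = M * K * R / γ := ⟨_, rfl⟩
  have hθ0 : 0 ≤ θ := by rw [hθdef]; positivity
  have hθ1 : θ < 1 := by
    rw [hθdef, div_lt_one hγ, hγdef]
    have h2 : 0 < 2 * M * K := by positivity
    rw [lt_div_iff₀ h2] at hR
    nlinarith
  obtain ⟨C, hCdef⟩ : ∃ C : ℝ, C = M / (1 - θ) := ⟨_, rfl⟩
  have h1θ : 0 < 1 - θ := by linarith
  have hC1 : 1 ≤ C := by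
    rw [hCdef, le_div_iff₀ h1θ]; nlinarith
  refine ⟨C, γ, hC1, hγ, fun t ht => ?_⟩
  set S : ℝ → ℝ := fun τ => sSup ((fun s => Real.exp (γ * s) * ‖u s‖) '' Set.Icc 0 τ) with hSdef
  have hbddS : ∀ τ : ℝ, 0 ≤ τ → BddAbove ((fun s => Real.exp (γ * s) * ‖u s‖) '' Set.Icc 0 τ) := by
    intro τ hτ
    refine ⟨Real.exp (γ * τ) * R, ?_⟩
    rintro x ⟨s, hs, rfl⟩
    exact mul_le_mul (Real.exp_le_exp.2 (by nlinarith [hs.1, hs.2])) (hbdd s hs.1)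
      (norm_nonneg _) (Real.exp_nonneg _)
  have hSnonneg : ∀ τ : ℝ, 0 ≤ τ → 0 ≤ S τ := by
    intro τ hτ
    have h0 : (0:ℝ) ≤ Real.exp (γ * 0) * ‖u 0‖ := by positivity
    exact h0.trans (le_csSup (hbddS τ hτ) ⟨0, Set.left_mem_Icc.2 hτ, rfl⟩)
  have key : ∀ τ : ℝ, 0 ≤ τ → ∀ t' ∈ Set.Icc (0:ℝ) τ,
      Real.exp (γ * t') * ‖u t'‖ ≤ M * ‖u₀‖ + θ * S τ := by
    intro τ hτ t' ht'
    have ht'0 : (0:ℝ) ≤ t' := ht'.1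
    have hS0 := hSnonneg τ hτ
    have hnorm : ‖u t'‖ ≤ (M * ‖u₀‖ + θ * S τ) * Real.exp (-γ * t') := by
      rw [hmild t' ht'0]
      have h1 : ‖T t' u₀‖ ≤ M * Real.exp (-δ * t') * ‖u₀‖ :=
        le_trans ((T t').le_opNorm u₀) (mul_le_mul_of_nonneg_right (hdecay t' ht'0) (norm_nonneg _))
      have h2 : ‖∫ s in (0:ℝ)..t', T (t' - s) (f (u s))‖ ≤
          M * K * R * S τ * Real.exp (-δ * t') * ((Real.exp (γ * t') - 1) / γ) := by
        calc ‖∫ s in (0:ℝ)..t', T (t' - s) (f (u s))‖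
            ≤ ∫ s in (0:ℝ)..t', ‖T (t' - s) (f (u s))‖ :=
              intervalIntegral.norm_integral_le_integral_norm ht'0
          _ ≤ ∫ s in (0:ℝ)..t', M * K * R * S τ * Real.exp (-δ * t') * Real.exp (γ * s) := by
              rw [intervalIntegral.integral_of_le ht'0, intervalIntegral.integral_of_le ht'0]
              refine MeasureTheory.integral_mono_of_nonneg
                (Filter.Eventually.of_forall fun s => norm_nonneg _)
                ((Continuous.integrableOn_Ioc (by continuity))) ?_
              refine (MeasureTheory.ae_restrict_iff' measurableSet_Ioc).2
                (Filter.Eventually.of_forall fun s hs => ?_)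
              have hs0 : (0:ℝ) ≤ s := le_of_lt hs.1
              have hst : s ≤ t' := hs.2
              have hus : ‖u s‖ ≤ Real.exp (-(γ * s)) * S τ :=
                aux_exp_le (le_csSup (hbddS τ hτ) ⟨s, ⟨hs0, hst.trans ht'.2⟩, rfl⟩)
              have husR : ‖u s‖ ≤ R := hbdd s hs0
              have hTbd : ‖T (t' - s)‖ ≤ M * Real.exp (-δ * (t' - s)) :=
                hdecay _ (by linarith)
              calc ‖T (t' - s) (f (u s))‖
                  ≤ ‖T (t' - s)‖ * ‖f (u s)‖ := (T (t' - s)).le_opNorm _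
                _ ≤ (M * Real.exp (-δ * (t' - s))) * (K * ‖u s‖ ^ 2) := by
                    apply mul_le_mul hTbd (hf _) (norm_nonneg _)
                    positivity
                _ ≤ (M * Real.exp (-δ * (t' - s))) * (K * (R * (Real.exp (-(γ * s)) * S τ))) := by
                    apply mul_le_mul_of_nonneg_left _ (by positivity)
                    apply mul_le_mul_of_nonneg_left _ (le_of_lt hK)
                    rw [pow_two]
                    exact mul_le_mul husR hus (norm_nonneg _) hR0
                _ = M * K * R * S τ * (Real.exp (-δ * (t' - s)) * Real.exp (-(γ * s))) := by
                    ring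
                _ = M * K * R * S τ * Real.exp (-δ * (t' - s) + -(γ * s)) := by
                    rw [← Real.exp_add]
                _ = M * K * R * S τ * Real.exp (-δ * t' + γ * s) := by
                    congr 1
                    rw [hγdef]; ring
                _ = M * K * R * S τ * Real.exp (-δ * t') * Real.exp (γ * s) := by
                    rw [Real.exp_add, ← mul_assoc]
          _ = M * K * R * S τ * Real.exp (-δ * t') * ∫ s in (0:ℝ)..t', Real.exp (γ * s) := by
              rw [← intervalIntegral.integral_const_mul]
          _ = M * K * R * S τ * Real.exp (-δ * t') * ((Real.exp (γ * t') - 1) / γ) := by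
              congr 1
              rw [intervalIntegral.integral_comp_mul_left Real.exp (ne_of_gt hγ)]
              rw [mul_zero, integral_exp, Real.exp_zero, smul_eq_mul, inv_mul_eq_div]
      calc ‖T t' u₀ + ∫ s in (0:ℝ)..t', T (t' - s) (f (u s))‖
          ≤ ‖T t' u₀‖ + ‖∫ s in (0:ℝ)..t', T (t' - s) (f (u s))‖ := norm_add_le _ _
        _ ≤ M * Real.exp (-δ * t') * ‖u₀‖ +
            M * K * R * S τ * Real.exp (-δ * t') * ((Real.exp (γ * t') - 1) / γ) :=
            add_le_add h1 h2
        _ ≤ (M * ‖u₀‖ + θ * S τ) * Real.exp (-γ * t') := by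
            have hE12 : Real.exp (-δ * t') * Real.exp (γ * t') = Real.exp (-γ * t') := by
              rw [← Real.exp_add]; congr 1; rw [hγdef]; ring
            have hE13 : Real.exp (-δ * t') ≤ Real.exp (-γ * t') :=
              Real.exp_le_exp.2 (by nlinarith)
            have hrw : M * K * R * S τ * Real.exp (-δ * t') * ((Real.exp (γ * t') - 1) / γ)
                = θ * (S τ * (Real.exp (-δ * t') * Real.exp (γ * t') - Real.exp (-δ * t'))) := by
              rw [hθdef]; field_simp
            rw [hrw, hE12]
            have hE1pos := Real.exp_pos (-δ * t')
            nlinarith [norm_nonneg u₀, mul_nonneg hθ0 hS0,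
              mul_nonneg (mul_nonneg hθ0 hS0) (le_of_lt hE1pos),
              mul_le_mul_of_nonneg_left hE13 (mul_nonneg hM0.le (norm_nonneg u₀))]
    calc Real.exp (γ * t') * ‖u t'‖
        ≤ Real.exp (γ * t') * ((M * ‖u₀‖ + θ * S τ) * Real.exp (-γ * t')) :=
          mul_le_mul_of_nonneg_left hnorm (Real.exp_nonneg _)
      _ = M * ‖u₀‖ + θ * S τ := by
          rw [mul_comm, mul_assoc, ← Real.exp_add]
          simp
  have hSle : S t ≤ C * ‖u₀‖ := by
    have h : S t ≤ M * ‖u₀‖ + θ * S t := by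
      refine csSup_le ⟨Real.exp (γ * 0) * ‖u 0‖, ⟨0, Set.left_mem_Icc.2 ht, rfl⟩⟩ ?_
      rintro x ⟨s, hs, rfl⟩
      exact key t ht s hs
    rw [hCdef, div_mul_eq_mul_div, le_div_iff₀ h1θ]
    nlinarith [hSnonneg t ht]
  have h1 : Real.exp (γ * t) * ‖u t‖ ≤ C * ‖u₀‖ :=
    le_trans (le_csSup (hbddS t ht) ⟨t, Set.right_mem_Icc.2 ht, rfl⟩) hSle
  calc ‖u t‖ ≤ Real.exp (-(γ * t)) * (C * ‖u₀‖) := aux_exp_le h1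
    _ = C * Real.exp (-γ * t) * ‖u₀‖ := by rw [neg_mul, mul_left_comm, ← mul_assoc]
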